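/- Suppose that for every subset A ⊆ X of even cardinality one has 1 − 2γ_A > 0 and μ_A = −(1/2)·ln(1 − 2γ_A). Then for every nonempty subset A ⊆ X of even cardinality, δ_A = −∑_{B ⊆ A, |B| even, B ≠ ∅} 2^{−|A|+1} · ln(1 − ∑_{C ⊆ B, |C| even, C ≠ ∅} 2^{|C|−1} · 𝔼_{|B|−|C|} · s_C). Equivalently, in matrix form δ = −G·log(1 − G^{−1}·s), where δ and s are the vectors of diversities and segregating-site probabilities indexed by nonempty even-cardinality subsets, G_{AB} = 2^{−|A|+1} for B ⊆ A (and 0 otherwise), (G^{−1})_{AB} = 2^{|B|−1}𝔼_{|A|−|B|} for B ⊆ A (and 0 otherwise), and log is applied componentwise. -/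

import Mathlib

open Finset

/-- The Euler numbers `𝔼ₖ`, defined by the EGF `1/cosh x = ∑ₖ 𝔼ₖ xᵏ/k!`
(so `𝔼₀ = 1`, `𝔼₂ = −1`, `𝔼₄ = 5`, and `𝔼ₖ = 0` for odd `k`); this recurrence
is obtained by equating coefficients in `cosh x · (1/cosh x) = 1`. -/
noncomputable def eulerNumber : ℕ → ℚ
  | n =>
    (if n = 0 then 1 else 0) -
      ∑ k : Fin n, if (n - (k : ℕ)) % 2 = 0 then ((n.choose k : ℚ) * eulerNumber k) else 0
  decreasing_by exact k.2

section Helpers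

lemma euler_rec (n : ℕ) :
    ∑ k ∈ Finset.range (n+1),
      (if (n - k) % 2 = 0 then (n.choose k : ℚ) * eulerNumber k else 0)
      = if n = 0 then 1 else 0 := by
  rw [Finset.sum_range_succ]
  have h1 : ((n - n) % 2 = 0) := by simp
  rw [if_pos h1, Nat.choose_self, Nat.cast_one, one_mul, eulerNumber,
    ← Fin.sum_univ_eq_sum_range (fun k => if (n - k) % 2 = 0 then (n.choose k : ℚ) * eulerNumber k else 0) n]
  ring

lemma euler_sum_q (m : ℕ) :
    ∑ j ∈ Finset.range (m+1),
      (if Even j then (m.choose j : ℚ) * eulerNumber (m - j) else 0)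
      = if m = 0 then 1 else 0 := by
  rw [← euler_rec m, ← Finset.sum_range_reflect
    (fun k => if (m - k) % 2 = 0 then (m.choose k : ℚ) * eulerNumber k else 0) (m+1)]
  apply Finset.sum_congr rfl
  intro j hj
  have hjm : j ≤ m := Nat.lt_succ_iff.mp (Finset.mem_range.mp hj)
  have e1 : m + 1 - 1 - j = m - j := by omega
  have e2 : m - (m - j) = j := by omega
  rw [e1, e2, Nat.choose_symm hjm]
  congr 1
  simp [Nat.even_iff]

lemma euler_sum_real (m : ℕ) :
    ∑ j ∈ Finset.range (m+1),
      (if Even j then (m.choose j : ℝ) * (eulerNumber (m - j) : ℝ) else 0)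
      = if m = 0 then 1 else 0 := by
  have h := euler_sum_q m
  rw [show ((if m = 0 then (1:ℝ) else 0)) = ((if m = 0 then (1:ℚ) else 0 : ℚ) : ℝ) by
      split <;> simp,
    ← h, Rat.cast_sum]
  apply Finset.sum_congr rfl
  intro j _
  split <;> simp

lemma inner_euler {α : Type*} [DecidableEq α] (B D : Finset α) (hDB : D ⊆ B)
    (hD : Even D.card) :
    ∑ C ∈ B.powerset.filter (fun C => D ⊆ C ∧ Even C.card),
      (eulerNumber (B.card - C.card) : ℝ) = if D = B then 1 else 0 := by
  have step1 : ∑ C ∈ B.powerset.filter (fun C => D ⊆ C ∧ Even C.card),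
      (eulerNumber (B.card - C.card) : ℝ)
      = ∑ E ∈ (B \ D).powerset.filter (fun E => Even E.card),
          (eulerNumber ((B \ D).card - E.card) : ℝ) := by
    apply Finset.sum_nbij' (i := fun C => C \ D) (j := fun E => D ∪ E)
    · intro C hC
      rw [Finset.mem_filter, Finset.mem_powerset] at hC ⊢
      obtain ⟨hCB, hDC, hCe⟩ := hC
      refine ⟨Finset.sdiff_subset_sdiff hCB Finset.Subset.rfl, ?_⟩
      rw [Finset.card_sdiff_of_subset hDC, Nat.even_sub (Finset.card_le_card hDC)]
      tauto
    · intro E hE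
      rw [Finset.mem_filter, Finset.mem_powerset] at hE ⊢
      obtain ⟨hEB, hEe⟩ := hE
      have hdisj : Disjoint D E :=
        (Finset.disjoint_of_subset_left hEB Finset.sdiff_disjoint).symm
      refine ⟨Finset.union_subset hDB (hEB.trans (Finset.sdiff_subset)),
        Finset.subset_union_left, ?_⟩
      rw [Finset.card_union_of_disjoint hdisj]
      exact hD.add hEe
    · intro C hC
      rw [Finset.mem_filter] at hC
      exact Finset.union_sdiff_of_subset hC.2.1
    · intro E hE
      rw [Finset.mem_filter, Finset.mem_powerset] at hE
      exact Finset.union_sdiff_cancel_left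
        ((Finset.disjoint_of_subset_left hE.1 Finset.sdiff_disjoint).symm)
    · intro C hC
      rw [Finset.mem_filter, Finset.mem_powerset] at hC
      obtain ⟨hCB, hDC, _⟩ := hC
      congr 2
      rw [Finset.card_sdiff_of_subset hDC, Finset.card_sdiff_of_subset hDB]
      have h1 : D.card ≤ C.card := Finset.card_le_card hDC
      have h2 : C.card ≤ B.card := Finset.card_le_card hCB
      omega
  rw [step1, Finset.sum_filter, Finset.powerset_card_disjiUnion]
  erw [Finset.sum_disjiUnion]
  have step2 : ∀ j ∈ Finset.range ((B \ D).card + 1),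
      ∑ E ∈ Finset.powersetCard j (B \ D),
        (if Even E.card then (eulerNumber ((B \ D).card - E.card) : ℝ) else 0)
      = if Even j then ((B \ D).card.choose j : ℝ) * (eulerNumber ((B \ D).card - j) : ℝ)
        else 0 := by
    intro j _
    have : ∀ E ∈ Finset.powersetCard j (B \ D),
        (if Even E.card then (eulerNumber ((B \ D).card - E.card) : ℝ) else 0)
        = if Even j then (eulerNumber ((B \ D).card - j) : ℝ) else 0 := by
      intro E hE
      rw [(Finset.mem_powersetCard.mp hE).2]
    rw [Finset.sum_congr rfl this, Finset.sum_const, Finset.card_powersetCard, nsmul_eq_mul]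
    split <;> ring
  rw [Finset.sum_congr rfl step2, euler_sum_real]
  have : (B \ D).card = 0 ↔ D = B := by
    rw [Finset.card_eq_zero, Finset.sdiff_eq_empty_iff_subset]
    exact ⟨fun h => Finset.Subset.antisymm hDB h, fun h => h ▸ Finset.Subset.rfl⟩
  simp only [this]

variable {α : Type*} [Fintype α] [DecidableEq α]

lemma signsum (A D : Finset α) :
    ∑ B ∈ A.powerset, ((-1:ℝ))^(B ∩ D).card =
      if (A ∩ D).Nonempty then 0 else 2^A.card := by
  have h1 : ∀ B ∈ A.powerset, ((-1:ℝ))^(B ∩ D).card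
      = (∏ b ∈ B, (if b ∈ D then (-1:ℝ) else 1)) * ∏ b ∈ A \ B, (1:ℝ) := by
    intro B _
    rw [Finset.prod_ite, Finset.prod_const, Finset.prod_const, one_pow, mul_one,
      Finset.filter_mem_eq_inter, Finset.prod_const, one_pow, mul_one]
  rw [Finset.sum_congr rfl h1, ← Finset.prod_add]
  have h2 : ∀ a ∈ A, ((if a ∈ D then (-1:ℝ) else 1) + 1) = if a ∈ D then 0 else 2 := by
    intro a _; split <;> norm_num
  rw [Finset.prod_congr rfl h2, Finset.prod_ite, Finset.prod_const, Finset.prod_const,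
    Finset.filter_mem_eq_inter]
  by_cases h : (A ∩ D).Nonempty
  · rw [if_pos h, zero_pow (Finset.card_ne_zero.mpr h), zero_mul]
  · rw [if_neg h]
    rw [Finset.not_nonempty_iff_eq_empty] at h
    have hAD : A \ D = A := by
      rw [Finset.sdiff_eq_self_iff_disjoint, Finset.disjoint_iff_inter_eq_empty, h]
    rw [h, Finset.card_empty, pow_zero, one_mul]
    congr 1
    rw [← hAD]
    congr 1
    ext a; simp [Finset.mem_sdiff, Finset.mem_filter]

lemma hadamard (f : Finset α → ℝ) (A : Finset α) (hA : A.Nonempty) :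
    ∑ B ∈ A.powerset.filter (fun B => Even B.card ∧ B.Nonempty),
        (2:ℝ)^(2 - (A.card:ℤ)) *
          ∑ D ∈ univ.filter (fun D : Finset α => Odd (B ∩ D).card), f D
      = ∑ D ∈ univ.filter (fun D : Finset α => (A ∩ D).Nonempty ∧ (A \ D).Nonempty), f D := by
  have key : ∀ B ∈ A.powerset,
      (if Even B.card ∧ B.Nonempty then
        (2:ℝ)^(2 - (A.card:ℤ)) * ∑ D ∈ univ.filter (fun D : Finset α => Odd (B ∩ D).card), f D
       else 0)
      = ∑ D : Finset α, (2:ℝ)^(2 - (A.card:ℤ)) * f D *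
          ((1 + (-1:ℝ)^B.card)/2) * ((1 - (-1:ℝ)^((B ∩ D).card))/2) := by
    intro B _
    have hin : ∀ D : Finset α,
        (2:ℝ)^(2 - (A.card:ℤ)) * f D * ((1 + (-1:ℝ)^B.card)/2) * ((1 - (-1:ℝ)^((B ∩ D).card))/2)
        = ((1 + (-1:ℝ)^B.card)/2) * ((2:ℝ)^(2 - (A.card:ℤ)) *
            (if Odd (B ∩ D).card then f D else 0)) := by
      intro D
      by_cases h : Odd (B ∩ D).card
      · rw [if_pos h, Odd.neg_one_pow h]; ring
      · rw [if_neg h, Nat.not_odd_iff_even] at *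
        rw [h.neg_one_pow]; ring
    rw [Finset.sum_congr rfl (fun D _ => hin D), ← Finset.mul_sum, ← Finset.mul_sum,
      ← Finset.sum_filter]
    by_cases hB : Even B.card ∧ B.Nonempty
    · rw [if_pos hB, hB.1.neg_one_pow]; ring
    · rw [if_neg hB]
      by_cases he : Even B.card
      · have hBe : B = ∅ := by
          rcases Finset.eq_empty_or_nonempty B with h | h
          · exact h
          · exact absurd ⟨he, h⟩ hB
        subst hBe
        have : (univ.filter (fun D : Finset α => Odd ((∅:Finset α) ∩ D).card)) = ∅ := by
          apply Finset.filter_false_of_mem; intro D _; simp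
        rw [this, Finset.sum_empty, mul_zero, mul_zero]
      · rw [(Nat.not_even_iff_odd.mp he) |>.neg_one_pow]
        ring_nf
  rw [Finset.sum_filter, Finset.sum_congr rfl key, Finset.sum_comm]
  rw [Finset.sum_filter]
  apply Finset.sum_congr rfl
  intro D _
  have e1 : ∀ B ∈ A.powerset,
      (2:ℝ)^(2 - (A.card:ℤ)) * f D * ((1 + (-1:ℝ)^B.card)/2) * ((1 - (-1:ℝ)^((B ∩ D).card))/2)
      = ((2:ℝ)^(2 - (A.card:ℤ)) * f D / 4) *
        (1 + (-1:ℝ)^((B ∩ (univ:Finset α)).card) - (-1:ℝ)^((B ∩ D).card)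
          - (-1:ℝ)^((B ∩ Dᶜ).card)) := by
    intro B _
    have hBc : B ∩ Dᶜ = B \ D := by ext a; simp [Finset.mem_sdiff]
    have hsplit : (B ∩ D).card + (B ∩ Dᶜ).card = B.card := by
      rw [hBc]; exact Finset.card_inter_add_card_sdiff B D
    have hx : ((-1:ℝ))^B.card = (-1:ℝ)^((B ∩ D).card) * (-1:ℝ)^((B ∩ Dᶜ).card) := by
      rw [← pow_add, hsplit]
    have hu : B ∩ (univ:Finset α) = B := Finset.inter_univ B
    rw [hu, hx]
    have hsq : ((-1:ℝ))^((B ∩ D).card) * ((-1:ℝ))^((B ∩ D).card) = 1 := by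
      rw [← pow_add, Even.neg_one_pow ⟨(B ∩ D).card, rfl⟩]
    linear_combination (-(2:ℝ)^(2 - (A.card:ℤ)) * f D * (-1:ℝ)^((B ∩ Dᶜ).card) / 4) * hsq
  rw [Finset.sum_congr rfl e1, ← Finset.mul_sum]
  have expand : ∑ B ∈ A.powerset,
      (1 + (-1:ℝ)^((B ∩ (univ:Finset α)).card) - (-1:ℝ)^((B ∩ D).card)
        - (-1:ℝ)^((B ∩ Dᶜ).card))
      = 2^A.card + (if (A ∩ (univ:Finset α)).Nonempty then 0 else 2^A.card)
        - (if (A ∩ D).Nonempty then 0 else 2^A.card)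
        - (if (A ∩ Dᶜ).Nonempty then 0 else 2^A.card) := by
    rw [Finset.sum_sub_distrib, Finset.sum_sub_distrib, Finset.sum_add_distrib,
      Finset.sum_const, Finset.card_powerset, signsum, signsum, signsum]
    simp
  rw [expand]
  have hAuniv : (A ∩ (univ:Finset α)).Nonempty := by rwa [Finset.inter_univ]
  rw [if_pos hAuniv]
  have hcompl : A ∩ Dᶜ = A \ D := by ext a; simp [Finset.mem_sdiff]
  have hDc : (A ∩ Dᶜ).Nonempty ↔ (A \ D).Nonempty := by rw [hcompl]
  have hpow : (2:ℝ)^(2 - (A.card:ℤ)) * (2:ℝ)^(A.card) = 4 := by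
    rw [← zpow_natCast (2:ℝ) A.card, ← zpow_add₀ (by norm_num : (2:ℝ) ≠ 0)]
    norm_num
  by_cases h1 : (A ∩ D).Nonempty
  · by_cases h2 : (A \ D).Nonempty
    · rw [if_pos h1, if_pos (hDc.mpr h2), if_pos ⟨h1, h2⟩]
      linear_combination (f D / 4) * hpow
    · rw [if_pos h1, if_neg (fun hc => h2 (hDc.mp hc)), if_neg (fun hc => h2 hc.2)]
      ring
  · have h2 : (A \ D).Nonempty := by
      rcases hA with ⟨a, ha⟩
      refine ⟨a, Finset.mem_sdiff.mpr ⟨ha, fun hD => h1 ⟨a, Finset.mem_inter.mpr ⟨ha, hD⟩⟩⟩⟩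
    rw [if_neg h1, if_pos (hDc.mpr h2), if_neg (fun hc => h1 hc.1)]
    ring

end Helpers

/-- Let `p` be a site-pattern distribution with segregating-site
probabilities `s`, and `w` a symmetrized split weight function with phylogenetic
diversities `δ`; let `γ A = ∑_{B : |A∩B| odd} (p B + p Bᶜ)/2` and
`μ A = ∑_{B : |A∩B| odd} w B` for `|A|` even (`γ A = μ A = 0` for `|A|` odd).
Suppose that for every subset `A` of even cardinality, `1 − 2γ_A > 0` and
`μ_A = −(1/2)·ln(1 − 2γ_A)` (Hendy's path-set identity).  Then for every nonempty
even-cardinality subset `A`,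
`δ_A = −∑_{B ⊆ A, |B| even, B ≠ ∅} 2^{−|A|+1} ·
  ln(1 − ∑_{C ⊆ B, |C| even, C ≠ ∅} 2^{|C|−1} 𝔼_{|B|−|C|} s_C)`,
i.e. in matrix form `δ = −G·log(𝟙 − G⁻¹·s)`. -/
theorem diversity_from_segregating_transform
    {α : Type*} [Fintype α] [DecidableEq α]
    (p : Finset α → ℝ) (hp : ∀ A : Finset α, 0 ≤ p A)
    (hsum : ∑ A : Finset α, p A = 1)
    (w : Finset α → ℝ) (hw : ∀ B : Finset α, 0 ≤ w B)
    (hwsym : ∀ B : Finset α, w B = w Bᶜ)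
    (s : Finset α → ℝ)
    (hs : ∀ A : Finset α, s A =
      ∑ B ∈ univ.filter (fun B : Finset α => (A ∩ B).Nonempty ∧ (A \ B).Nonempty), p B)
    (δ : Finset α → ℝ)
    (hδ : ∀ A : Finset α, δ A =
      ∑ B ∈ univ.filter (fun B : Finset α => (A ∩ B).Nonempty ∧ (A \ B).Nonempty), w B)
    (γ : Finset α → ℝ)
    (hγ : ∀ A : Finset α, γ A =
      if Even A.card then
        ∑ B ∈ univ.filter (fun B : Finset α => Odd (A ∩ B).card), (p B + p Bᶜ) / 2
      else 0)
    (μ : Finset α → ℝ)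
    (hμ : ∀ A : Finset α, μ A =
      if Even A.card then
        ∑ B ∈ univ.filter (fun B : Finset α => Odd (A ∩ B).card), w B
      else 0)
    (hpathset : ∀ A : Finset α, Even A.card →
      1 - 2 * γ A > 0 ∧ μ A = -(1 / 2) * Real.log (1 - 2 * γ A))
    (A : Finset α) (hA : A.Nonempty) (hAeven : Even A.card) :
    δ A = -∑ B ∈ A.powerset.filter (fun B : Finset α => Even B.card ∧ B.Nonempty),
      (2 : ℝ) ^ (-(A.card : ℤ) + 1) *
        Real.log (1 -
          ∑ C ∈ B.powerset.filter (fun C : Finset α => Even C.card ∧ C.Nonempty),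
            (2 : ℝ) ^ ((C.card : ℤ) - 1) * (eulerNumber (B.card - C.card) : ℝ) * s C) := by
  -- the symmetrized pattern probabilities give the same segregating sums
  have hqsum : ∀ A' : Finset α,
      ∑ D ∈ univ.filter (fun D : Finset α => (A' ∩ D).Nonempty ∧ (A' \ D).Nonempty),
        (p D + p Dᶜ) / 2
      = ∑ D ∈ univ.filter (fun D : Finset α => (A' ∩ D).Nonempty ∧ (A' \ D).Nonempty),
        p D := by
    intro A'
    have hc : ∑ D ∈ univ.filter (fun D : Finset α => (A' ∩ D).Nonempty ∧ (A' \ D).Nonempty), p Dᶜ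
        = ∑ D ∈ univ.filter (fun D : Finset α => (A' ∩ D).Nonempty ∧ (A' \ D).Nonempty), p D := by
      apply Finset.sum_nbij' (i := fun D => Dᶜ) (j := fun D => Dᶜ)
      · intro D hD
        rw [Finset.mem_filter] at hD ⊢
        have h1 : A' ∩ Dᶜ = A' \ D := by ext a; simp [Finset.mem_sdiff]
        have h2 : A' \ Dᶜ = A' ∩ D := by ext a; simp [Finset.mem_sdiff]
        exact ⟨Finset.mem_univ _, by rw [h1]; exact hD.2.2, by rw [h2]; exact hD.2.1⟩
      · intro D hD
        rw [Finset.mem_filter] at hD ⊢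
        have h1 : A' ∩ Dᶜ = A' \ D := by ext a; simp [Finset.mem_sdiff]
        have h2 : A' \ Dᶜ = A' ∩ D := by ext a; simp [Finset.mem_sdiff]
        exact ⟨Finset.mem_univ _, by rw [h1]; exact hD.2.2, by rw [h2]; exact hD.2.1⟩
      · intro D _; exact compl_compl D
      · intro D _; exact compl_compl D
      · intro D _; rfl
    rw [show (∑ D ∈ univ.filter
          (fun D : Finset α => (A' ∩ D).Nonempty ∧ (A' \ D).Nonempty), (p D + p Dᶜ) / 2)
        = (∑ D ∈ univ.filter
            (fun D : Finset α => (A' ∩ D).Nonempty ∧ (A' \ D).Nonempty), p D) / 2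
          + (∑ D ∈ univ.filter
            (fun D : Finset α => (A' ∩ D).Nonempty ∧ (A' \ D).Nonempty), p Dᶜ) / 2 from by
      rw [← Finset.sum_div, Finset.sum_add_distrib]; ring]
    rw [hc]; ring
  have hsq : ∀ A' : Finset α, s A' =
      ∑ D ∈ univ.filter (fun D : Finset α => (A' ∩ D).Nonempty ∧ (A' \ D).Nonempty),
        (p D + p Dᶜ) / 2 := by
    intro A'; rw [hs A', hqsum A']
  have stepC : ∀ C : Finset α, C.Nonempty → Even C.card →
      s C = ∑ Dd ∈ C.powerset.filter (fun Dd => Even Dd.card ∧ Dd.Nonempty),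
        (2:ℝ)^(2 - (C.card:ℤ)) * γ Dd := by
    intro C hCne hCe
    rw [hsq C, ← hadamard (fun D => (p D + p Dᶜ)/2) C hCne]
    apply Finset.sum_congr rfl
    intro Dd hDd
    rw [Finset.mem_filter] at hDd
    rw [hγ Dd, if_pos hDd.2.1]
  have stepT : ∀ B : Finset α, B.Nonempty → Even B.card →
      ∑ C ∈ B.powerset.filter (fun C : Finset α => Even C.card ∧ C.Nonempty),
        (2:ℝ)^((C.card:ℤ)-1) * (eulerNumber (B.card - C.card) : ℝ) * s C = 2 * γ B := by
    intro B hBne hBe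
    have claim1 : ∀ C ∈ B.powerset,
        (if Even C.card ∧ C.Nonempty then
          (2:ℝ)^((C.card:ℤ)-1) * (eulerNumber (B.card - C.card) : ℝ) * s C else 0)
        = ∑ D ∈ B.powerset,
            (if (Even C.card ∧ C.Nonempty) ∧ D ⊆ C ∧ Even D.card ∧ D.Nonempty then
              2 * (eulerNumber (B.card - C.card) : ℝ) * γ D else 0) := by
      intro C hC
      rw [Finset.mem_powerset] at hC
      by_cases hPC : Even C.card ∧ C.Nonempty
      · rw [if_pos hPC, stepC C hPC.2 hPC.1, Finset.mul_sum]
        have dom : ∀ (G : Finset α → ℝ),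
            ∑ D ∈ C.powerset.filter (fun D => Even D.card ∧ D.Nonempty), G D
            = ∑ D ∈ B.powerset, (if D ⊆ C ∧ Even D.card ∧ D.Nonempty then G D else 0) := by
          intro G
          rw [← Finset.sum_filter]
          apply Finset.sum_congr _ (fun _ _ => rfl)
          ext D
          simp only [Finset.mem_filter, Finset.mem_powerset]
          constructor
          · rintro ⟨h1, h2, h3⟩; exact ⟨h1.trans hC, h1, h2, h3⟩
          · rintro ⟨_, h1, h2, h3⟩; exact ⟨h1, h2, h3⟩
        rw [dom]
        apply Finset.sum_congr rfl
        intro D _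
        by_cases hQ : D ⊆ C ∧ Even D.card ∧ D.Nonempty
        · rw [if_pos hQ, if_pos ⟨hPC, hQ⟩]
          have h2 : (2:ℝ)^((C.card:ℤ)-1) * (2:ℝ)^(2-(C.card:ℤ)) = 2 := by
            rw [← zpow_add₀ (by norm_num : (2:ℝ) ≠ 0)]; norm_num
          linear_combination (eulerNumber (B.card - C.card) : ℝ) * γ D * h2
        · rw [if_neg hQ, if_neg (fun hc => hQ hc.2)]
      · rw [if_neg hPC]
        symm
        apply Finset.sum_eq_zero
        intro D _
        rw [if_neg (fun hc => hPC hc.1)]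
    rw [Finset.sum_filter, Finset.sum_congr rfl claim1, Finset.sum_comm]
    have claim3 : ∀ D ∈ B.powerset,
        ∑ C ∈ B.powerset,
          (if (Even C.card ∧ C.Nonempty) ∧ D ⊆ C ∧ Even D.card ∧ D.Nonempty then
            2 * (eulerNumber (B.card - C.card) : ℝ) * γ D else 0)
        = if Even D.card ∧ D.Nonempty then
            (2 * γ D) * (if D = B then 1 else 0) else 0 := by
      intro D hD
      rw [Finset.mem_powerset] at hD
      by_cases hQ : Even D.card ∧ D.Nonempty
      · rw [if_pos hQ]
        have pt : ∀ C ∈ B.powerset,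
            (if (Even C.card ∧ C.Nonempty) ∧ D ⊆ C ∧ Even D.card ∧ D.Nonempty then
              2 * (eulerNumber (B.card - C.card) : ℝ) * γ D else 0)
            = if D ⊆ C ∧ Even C.card then
                (2 * γ D) * (eulerNumber (B.card - C.card) : ℝ) else 0 := by
          intro C _
          by_cases hc : D ⊆ C ∧ Even C.card
          · have hCne : C.Nonempty := hQ.2.mono hc.1
            rw [if_pos hc, if_pos ⟨⟨hc.2, hCne⟩, hc.1, hQ⟩]; ring
          · rw [if_neg hc, if_neg (fun hx => hc ⟨hx.2.1, hx.1.1⟩)]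
        rw [Finset.sum_congr rfl pt, ← Finset.sum_filter, ← Finset.mul_sum,
          inner_euler B D hD hQ.1]
      · rw [if_neg hQ]
        apply Finset.sum_eq_zero
        intro C _
        rw [if_neg (fun hc => hQ ⟨hc.2.2.1, hc.2.2.2⟩)]
    rw [Finset.sum_congr rfl claim3]
    rw [Finset.sum_eq_single_of_mem B (Finset.mem_powerset_self B)]
    · rw [if_pos ⟨hBe, hBne⟩, if_pos rfl]; ring
    · intro D _ hne
      by_cases hQ : Even D.card ∧ D.Nonempty
      · rw [if_pos hQ, if_neg hne, mul_zero]
      · rw [if_neg hQ]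
  have stepF : δ A = ∑ B ∈ A.powerset.filter (fun B : Finset α => Even B.card ∧ B.Nonempty),
      (2:ℝ)^(2 - (A.card:ℤ)) * μ B := by
    rw [hδ A, ← hadamard w A hA]
    apply Finset.sum_congr rfl
    intro B hB
    rw [Finset.mem_filter] at hB
    rw [hμ B, if_pos hB.2.1]
  rw [stepF, ← Finset.sum_neg_distrib]
  apply Finset.sum_congr rfl
  intro B hB
  rw [Finset.mem_filter, Finset.mem_powerset] at hB
  obtain ⟨hBA, hBe, hBne⟩ := hB
  rw [(hpathset B hBe).2, stepT B hBne hBe]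
  have hp2 : (2:ℝ)^(2 - (A.card:ℤ)) = 2 * (2:ℝ)^(-(A.card:ℤ)+1) := by
    rw [show (2:ℝ) * (2:ℝ)^(-(A.card:ℤ)+1) = (2:ℝ)^(1:ℤ) * (2:ℝ)^(-(A.card:ℤ)+1) from by norm_num,
      ← zpow_add₀ (by norm_num : (2:ℝ) ≠ 0)]
    ring_nf
  linear_combination (-(1/2:ℝ) * Real.log (1 - 2 * γ B)) * hp2
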